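/- In the Artin braid group B_{m+n} with n ≥ 2, for every 1 ≤ i ≤ m the loop element a_i and the first moving crossing σ_{m+1} satisfy the mixed relation a_i σ_{m+1} a_i σ_{m+1} = σ_{m+1} a_i σ_{m+1} a_i. -/
import Mathlib


/-- Defining relations of the Artin braid group on `N` strands, with generators
indexed by `Fin (N-1)` (index `s : Fin (N-1)` corresponds to the 1-based generator
`σ_{s+1}`): the far commutation relations and the braid relations. -/
def braidRels (N : ℕ) : Set (FreeGroup (Fin (N - 1))) :=
  {x | ∃ s t : Fin (N - 1), (s : ℕ) + 2 ≤ (t : ℕ) ∧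
      x = FreeGroup.of s * FreeGroup.of t * (FreeGroup.of s)⁻¹ * (FreeGroup.of t)⁻¹} ∪
  {x | ∃ s t : Fin (N - 1), (s : ℕ) + 1 = (t : ℕ) ∧
      x = FreeGroup.of s * FreeGroup.of t * FreeGroup.of s *
          (FreeGroup.of t)⁻¹ * (FreeGroup.of s)⁻¹ * (FreeGroup.of t)⁻¹}

/-- The Artin braid group on `N` strands. -/
abbrev BraidGroup (N : ℕ) := PresentedGroup (braidRels N)

/-- The generator `σ_s` (1-based, `1 ≤ s ≤ N-1`); junk value `1` out of range. -/
def sig (N s : ℕ) : BraidGroup N :=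
  if h : 1 ≤ s ∧ s ≤ N - 1 then PresentedGroup.of ⟨s - 1, by omega⟩ else 1

/-- The loop element `a_i = σ_m σ_{m-1} ⋯ σ_{i+1} · σ_i² · σ_{i+1}⁻¹ ⋯ σ_m⁻¹`
(so `a_m = σ_m²`) in the braid group on `N` strands, `m` of which are fixed. -/
def loop (N m i : ℕ) : BraidGroup N :=
  (((List.range (m - i)).map (fun l => sig N (m - l))).prod) * (sig N i) ^ 2 *
    (((List.range (m - i)).map (fun l => sig N (m - l))).prod)⁻¹

/-- `λ_l := σ_{m+l} σ_{m+l-1} ⋯ σ_{m+1}`, with `λ_0 := 1`. -/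
def lam (N m l : ℕ) : BraidGroup N :=
  ((List.range l).map (fun t => sig N (m + l - t))).prod

/-- The positive looping `∏_{l=0}^{q-1} λ_l a_j λ_l⁻¹` of a `q`-strand cable of
moving strands around the `j`-th fixed strand. -/
def cable (N m j q : ℕ) : BraidGroup N :=
  ((List.range q).map (fun l => lam N m l * loop N m j * (lam N m l)⁻¹)).prod

/- ### Auxiliary machinery -/

lemma braidAux_mk_eq_one {N : ℕ} {r : FreeGroup (Fin (N - 1))} (hr : r ∈ braidRels N) :
    PresentedGroup.mk (braidRels N) r = 1 :=
  (QuotientGroup.eq_one_iff r).mpr (Subgroup.subset_normalClosure hr)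

/-- Far commutation relation in the braid group. -/
lemma braidAux_comm (N s t : ℕ) (hs : 1 ≤ s) (hst : s + 2 ≤ t) (ht : t ≤ N - 1) :
    sig N s * sig N t = sig N t * sig N s := by
  have hs2 : s ≤ N - 1 := by omega
  have ht1 : 1 ≤ t := by omega
  rw [sig, sig, dif_pos ⟨hs, hs2⟩, dif_pos ⟨ht1, ht⟩]
  set a : Fin (N - 1) := ⟨s - 1, by omega⟩ with ha
  set b : Fin (N - 1) := ⟨t - 1, by omega⟩ with hb
  have hr : FreeGroup.of a * FreeGroup.of b * (FreeGroup.of a)⁻¹ * (FreeGroup.of b)⁻¹ ∈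
      braidRels N := Or.inl ⟨a, b, by simp [ha, hb]; omega, rfl⟩
  have h1 := braidAux_mk_eq_one hr
  simp only [map_mul, map_inv] at h1
  rw [mul_inv_eq_one, mul_inv_eq_iff_eq_mul] at h1
  exact h1

/-- Braid relation in the braid group. -/
lemma braidAux_braid (N s : ℕ) (hs : 1 ≤ s) (h : s + 1 ≤ N - 1) :
    sig N s * sig N (s + 1) * sig N s = sig N (s + 1) * sig N s * sig N (s + 1) := by
  have hs2 : s ≤ N - 1 := by omega
  rw [sig, sig, dif_pos ⟨hs, hs2⟩, dif_pos ⟨by omega, h⟩]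
  set a : Fin (N - 1) := ⟨s - 1, by omega⟩ with ha
  set b : Fin (N - 1) := ⟨s + 1 - 1, by omega⟩ with hb
  have hr : FreeGroup.of a * FreeGroup.of b * FreeGroup.of a *
      (FreeGroup.of b)⁻¹ * (FreeGroup.of a)⁻¹ * (FreeGroup.of b)⁻¹ ∈ braidRels N :=
    Or.inr ⟨a, b, by simp [ha, hb]; omega, rfl⟩
  have h1 := braidAux_mk_eq_one hr
  simp only [map_mul, map_inv] at h1
  rw [mul_inv_eq_one, mul_inv_eq_iff_eq_mul, mul_inv_eq_iff_eq_mul] at h1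
  exact h1

/-- Partial conjugating product `σ_k σ_{k-1} ⋯ σ_{i+1}`. -/
def braidAux_sigProd (N i k : ℕ) : BraidGroup N :=
  ((List.range (k - i)).map (fun l => sig N (k - l))).prod

/-- Partial loop element `a_i` truncated at level `k`. -/
def braidAux_loopA (N i k : ℕ) : BraidGroup N :=
  braidAux_sigProd N i k * (sig N i) ^ 2 * (braidAux_sigProd N i k)⁻¹

lemma braidAux_loop_eq (N m i : ℕ) : loop N m i = braidAux_loopA N i m := rfl

lemma braidAux_sigProd_succ (N i k : ℕ) (h : i ≤ k) :
    braidAux_sigProd N i (k + 1) = sig N (k + 1) * braidAux_sigProd N i k := by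
  unfold braidAux_sigProd
  have h1 : k + 1 - i = (k - i) + 1 := by omega
  rw [h1, List.range_succ_eq_map, List.map_cons, List.prod_cons, List.map_map]
  have h2 : (fun l => sig N (k + 1 - l)) ∘ Nat.succ = fun l => sig N (k - l) := by
    funext l; simp [Function.comp, Nat.succ_sub_succ]
  rw [h2]
  norm_num

lemma braidAux_loopA_succ (N i k : ℕ) (h : i ≤ k) :
    braidAux_loopA N i (k + 1) =
      sig N (k + 1) * braidAux_loopA N i k * (sig N (k + 1))⁻¹ := by
  unfold braidAux_loopA
  rw [braidAux_sigProd_succ N i k h]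
  group

lemma braidAux_loopA_base (N i : ℕ) : braidAux_loopA N i i = (sig N i) ^ 2 := by
  simp [braidAux_loopA, braidAux_sigProd]

/-- The truncated loop commutes with far generators. -/
lemma braidAux_loopA_comm (N i : ℕ) (hi : 1 ≤ i) :
    ∀ k, i ≤ k → ∀ t, k + 2 ≤ t → t ≤ N - 1 →
      braidAux_loopA N i k * sig N t = sig N t * braidAux_loopA N i k := by
  intro k hik
  induction k, hik using Nat.le_induction with
  | base =>
    intro t h2 hN
    rw [braidAux_loopA_base]
    have h := braidAux_comm N i t hi h2 hN
    calc (sig N i) ^ 2 * sig N t = sig N i * (sig N i * sig N t) := by rw [pow_two]; group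
      _ = sig N i * (sig N t * sig N i) := by rw [h]
      _ = (sig N i * sig N t) * sig N i := by group
      _ = (sig N t * sig N i) * sig N i := by rw [h]
      _ = sig N t * (sig N i) ^ 2 := by rw [pow_two]; group
  | succ k hik IH =>
    intro t h2 hN
    rw [braidAux_loopA_succ N i k hik]
    set w := sig N (k + 1)
    set a := braidAux_loopA N i k
    set s := sig N t
    have h1 : w * s = s * w := braidAux_comm N (k + 1) t (by omega) (by omega) hN
    have h1' : w⁻¹ * s = s * w⁻¹ := by
      calc w⁻¹ * s = w⁻¹ * (s * w) * w⁻¹ := by group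
        _ = w⁻¹ * (w * s) * w⁻¹ := by rw [h1]
        _ = s * w⁻¹ := by group
    have h3 : a * s = s * a := IH t (by omega) hN
    calc w * a * w⁻¹ * s = w * a * (w⁻¹ * s) := by group
      _ = w * a * (s * w⁻¹) := by rw [h1']
      _ = w * (a * s) * w⁻¹ := by group
      _ = w * (s * a) * w⁻¹ := by rw [h3]
      _ = (w * s) * a * w⁻¹ := by group
      _ = (s * w) * a * w⁻¹ := by rw [h1]
      _ = s * (w * a * w⁻¹) := by group

section AbstractGroup
variable {G : Type*} [Group G]

/-- Base case of the mixed relation: `u² v u² v = v u² v u²` from the braid relation. -/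
lemma braidAux_mixed_base (u v : G) (hb : u * v * u = v * u * v) :
    u ^ 2 * v * u ^ 2 * v = v * u ^ 2 * v * u ^ 2 := by
  calc u ^ 2 * v * u ^ 2 * v = u * (u * v * u) * (u * v) := by rw [pow_two]; group
    _ = u * (v * u * v) * (u * v) := by rw [hb]
    _ = (u * v * u) * (v * u * v) := by group
    _ = (v * u * v) * (u * v * u) := by rw [hb]
    _ = v * u * (v * u * v) * u := by group
    _ = v * u * (u * v * u) * u := by rw [hb]
    _ = v * u ^ 2 * v * u ^ 2 := by rw [pow_two]; group

/-- Inductive step of the mixed relation under conjugation. -/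
lemma braidAux_mixed_step (Y w v : G) (hb : w * v * w = v * w * v)
    (hc : Y * v = v * Y) (hI : Y * w * Y * w = w * Y * w * Y) :
    (w * Y * w⁻¹) * v * (w * Y * w⁻¹) * v = v * (w * Y * w⁻¹) * v * (w * Y * w⁻¹) := by
  have hvw : w⁻¹ * v * w = v * w * v⁻¹ := by
    calc w⁻¹ * v * w = w⁻¹ * (v * w * v) * v⁻¹ := by group
      _ = w⁻¹ * (w * v * w) * v⁻¹ := by rw [hb]
      _ = v * w * v⁻¹ := by group
  have hc2 : v⁻¹ * Y * v = Y := by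
    calc v⁻¹ * Y * v = v⁻¹ * (Y * v) := by group
      _ = v⁻¹ * (v * Y) := by rw [hc]
      _ = Y := by group
  have key1 : Y * (v * w * v⁻¹) * Y * (v * w * v⁻¹) = v * (Y * w * Y * w) * v⁻¹ := by
    calc Y * (v * w * v⁻¹) * Y * (v * w * v⁻¹)
        = (Y * v) * w * (v⁻¹ * Y * v) * w * v⁻¹ := by group
      _ = (v * Y) * w * (v⁻¹ * Y * v) * w * v⁻¹ := by rw [hc]
      _ = (v * Y) * w * Y * w * v⁻¹ := by rw [hc2]
      _ = v * (Y * w * Y * w) * v⁻¹ := by group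
  have key2 : (v * w * v⁻¹) * Y * (v * w * v⁻¹) * Y = v * (w * Y * w * Y) * v⁻¹ := by
    calc (v * w * v⁻¹) * Y * (v * w * v⁻¹) * Y
        = v * w * (v⁻¹ * Y * v) * w * (v⁻¹ * Y * v) * v⁻¹ := by group
      _ = v * w * Y * w * (v⁻¹ * Y * v) * v⁻¹ := by rw [hc2]
      _ = v * w * Y * w * Y * v⁻¹ := by rw [hc2]
      _ = v * (w * Y * w * Y) * v⁻¹ := by group
  calc (w * Y * w⁻¹) * v * (w * Y * w⁻¹) * v
      = w * (Y * (w⁻¹ * v * w) * Y * (w⁻¹ * v * w)) * w⁻¹ := by group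
    _ = w * (Y * (v * w * v⁻¹) * Y * (v * w * v⁻¹)) * w⁻¹ := by rw [hvw]
    _ = w * (v * (Y * w * Y * w) * v⁻¹) * w⁻¹ := by rw [key1]
    _ = w * (v * (w * Y * w * Y) * v⁻¹) * w⁻¹ := by rw [hI]
    _ = w * ((v * w * v⁻¹) * Y * (v * w * v⁻¹) * Y) * w⁻¹ := by rw [key2]
    _ = w * ((w⁻¹ * v * w) * Y * (w⁻¹ * v * w) * Y) * w⁻¹ := by rw [hvw]
    _ = v * (w * Y * w⁻¹) * v * (w * Y * w⁻¹) := by group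

end AbstractGroup

/-- The mixed relation for the truncated loops, by induction on the truncation level. -/
lemma braidAux_main (N i : ℕ) (hi : 1 ≤ i) :
    ∀ k, i ≤ k → k + 1 ≤ N - 1 →
      braidAux_loopA N i k * sig N (k + 1) * braidAux_loopA N i k * sig N (k + 1) =
        sig N (k + 1) * braidAux_loopA N i k * sig N (k + 1) * braidAux_loopA N i k := by
  intro k hik
  induction k, hik using Nat.le_induction with
  | base =>
    intro hN
    rw [braidAux_loopA_base]
    exact braidAux_mixed_base _ _ (braidAux_braid N i hi hN)
  | succ k hik IH =>
    intro hN
    have hb := braidAux_braid N (k + 1) (by omega) hN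
    have hc := braidAux_loopA_comm N i hi k hik (k + 1 + 1) (by omega) (by omega)
    have hI := IH (by omega)
    rw [braidAux_loopA_succ N i k hik]
    exact braidAux_mixed_step _ _ _ hb hc hI

/-- The mixed relation `a_i σ_{m+1} a_i σ_{m+1} = σ_{m+1} a_i σ_{m+1} a_i` holds
in the braid group `B_{m+n}` for `n ≥ 2`. -/
theorem loop_sigma_mixed_relation (m n i : ℕ) (hm : 1 ≤ m) (hn : 2 ≤ n)
    (hi1 : 1 ≤ i) (hi2 : i ≤ m) :
    loop (m + n) m i * sig (m + n) (m + 1) * loop (m + n) m i * sig (m + n) (m + 1) =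
      sig (m + n) (m + 1) * loop (m + n) m i * sig (m + n) (m + 1) * loop (m + n) m i := by
  rw [braidAux_loop_eq]
  exact braidAux_main (m + n) i hi1 m hi2 (by omega)
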